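/- Fix a prime q, an integer d ≥ 2, t = ⌈2·log_q d + 2⌉, d distinct monic irreducible polynomials p_1, …, p_d of degree t over F = F_q, and a positive integer n with n ≥ 3dt. Let (B, β) be a good pair, T = T(B) = (Ā, D̄), and L = L_B(β). Then the set Ȳ_T(L) := { Ā + g·D̄ : g ∈ L } ∩ P_{<n+dt} has size exactly q^{dt}, where P_{<k} denotes the set of polynomials in F[x] of degree < k. -/

import Mathlib

open Finset Polynomial

/-- The value at `1/q` of a polynomial over `ZMod q`, with coefficients lifted to
`{0, 1, …, q−1} ⊆ ℝ`. -/
noncomputable def pev (q : ℕ) (g : Polynomial (ZMod q)) : ℝ :=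
  ∑ j ∈ Finset.range (g.natDegree + 1), ((g.coeff j).val : ℝ) / (q : ℝ) ^ j

/-- `r_p(f)`: writing `f = f₀ + f₁ p + f₂ p² + ⋯` in base `p` (each `fᵢ` of degree `< t`,
obtained as `(f /ₘ p^i) %ₘ p`), the real number
`(f₀(1/q) + f₁(1/q) q^(−t) + f₂(1/q) q^(−2t) + ⋯)/q`. -/
noncomputable def rp (q t : ℕ) (p f : Polynomial (ZMod q)) : ℝ :=
  (∑ i ∈ Finset.range (f.natDegree + 1), pev q ((f /ₘ p ^ i) %ₘ p) / (q : ℝ) ^ (i * t)) / q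

/-- The map `r : F[x] → [0,1)^d`, `r(f) = (r_{p 1}(f), …, r_{p d}(f))`. -/
noncomputable def rmap (q t d : ℕ) (p : Fin d → Polynomial (ZMod q))
    (f : Polynomial (ZMod q)) : Fin d → ℝ :=
  fun i => rp q t (p i) f

/-- The canonical box `∏ i, [a i / q^(t * k i), (a i + 1) / q^(t * k i))`. -/
def canonicalBox (q t d : ℕ) (k a : Fin d → ℕ) : Set (Fin d → ℝ) :=
  Set.univ.pi fun i =>
    Set.Ico ((a i : ℝ) / (q : ℝ) ^ (t * k i)) (((a i : ℝ) + 1) / (q : ℝ) ^ (t * k i))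

/-- A basic box in base `q` in `[0,1]^d` of volume `q^(-n)`. -/
def IsBasicBox (q d n : ℕ) (β : Set (Fin d → ℝ)) : Prop :=
  ∃ k a : Fin d → ℕ, (∀ i, a i + 1 ≤ q ^ k i) ∧ (∑ i, k i) = n ∧
    β = Set.univ.pi fun i =>
      Set.Ico ((a i : ℝ) / (q : ℝ) ^ k i) (((a i : ℝ) + 1) / (q : ℝ) ^ k i)

/-- A canonical box with parameter `t`, as a set. -/
def IsCanonicalBox (q t d : ℕ) (B : Set (Fin d → ℝ)) : Prop :=
  ∃ k a : Fin d → ℕ, (∀ i, a i + 1 ≤ q ^ (t * k i)) ∧ B = canonicalBox q t d k a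

/-- `(B, β)` is a good pair: `β` is a basic box of volume `q^(-n)` and `B` is the
smallest canonical box containing `β`. -/
def IsGoodPair (q t d n : ℕ) (B β : Set (Fin d → ℝ)) : Prop :=
  IsBasicBox q d n β ∧ IsCanonicalBox q t d B ∧ β ⊆ B ∧
    ∀ B' : Set (Fin d → ℝ), IsCanonicalBox q t d B' → β ⊆ B' → B ⊆ B'

/-- The polynomial obtained from `f` by setting the coefficients of
`x^0, x^1, …, x^(c-1)` to zero. -/
noncomputable def eraseLow (q : ℕ) (c : ℕ) (f : Polynomial (ZMod q)) : Polynomial (ZMod q) :=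
  ∑ j ∈ f.support.filter (fun j => c ≤ j), Polynomial.monomial j (f.coeff j)

section Helpers

variable {α β : Type*}

lemma myBijOn_inter_preimage {f : α → β} {s : Set α} {t : Set β}
    (h : Set.BijOn f s t) {t' : Set β} (h' : t' ⊆ t) :
    Set.BijOn f (s ∩ f ⁻¹' t') t' := by
  refine ⟨fun x hx => hx.2, h.injOn.mono Set.inter_subset_left, ?_⟩
  intro y hy
  obtain ⟨x, hx, hfx⟩ := h.surjOn (h' hy)
  exact ⟨x, ⟨hx, by simp [Set.mem_preimage, hfx, hy]⟩, hfx⟩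

lemma myBijOn_ncard {f : α → β} {s : Set α} {t : Set β} (h : Set.BijOn f s t) :
    s.ncard = t.ncard := by
  rw [← h.image_eq, Set.ncard_image_of_injOn h.injOn]

lemma myBijOn_of_ncard {f : α → β} {s : Set α} {t : Set β}
    (h1 : Set.MapsTo f s t) (h2 : Set.InjOn f s) (hcard : t.ncard ≤ s.ncard)
    (ht : t.Finite) : Set.BijOn f s t := by
  have himg : f '' s = t := by
    refine Set.eq_of_subset_of_ncard_le (Set.image_subset_iff.2 h1) ?_ ht
    rwa [Set.ncard_image_of_injOn h2]
  exact ⟨h1, h2, himg ▸ Set.Subset.rfl⟩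

lemma myNcard_pi {ι : Type*} [Fintype ι] {κ : ι → Type*} (s : ∀ i, Set (κ i)) :
    (Set.univ.pi s).ncard = ∏ i, (s i).ncard := by
  rw [← Nat.card_coe_set_eq, Nat.card_congr (Equiv.Set.univPi s), Nat.card_pi]
  simp [Nat.card_coe_set_eq]

lemma myNcard_prod (s : Set α) (t : Set β) : (s ×ˢ t).ncard = s.ncard * t.ncard := by
  rw [← Nat.card_coe_set_eq, Nat.card_congr (Equiv.Set.prod s t), Nat.card_prod,
    Nat.card_coe_set_eq, Nat.card_coe_set_eq]

end Helpers

section Poly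

variable {q : ℕ} [Fact q.Prime]

/-- polynomial with coefficient vector `v`. -/
noncomputable def ofVec {m : ℕ} (v : Fin m → ZMod q) : Polynomial (ZMod q) :=
  ∑ j : Fin m, Polynomial.monomial (j : ℕ) (v j)

lemma ofVec_coeff {m : ℕ} (v : Fin m → ZMod q) (j : Fin m) :
    (ofVec v).coeff j = v j := by
  rw [ofVec, Polynomial.finset_sum_coeff]
  rw [Finset.sum_eq_single j]
  · simp
  · intro b _ hbj
    rw [Polynomial.coeff_monomial, if_neg (by simpa [Fin.val_injective.eq_iff] using hbj)]
  · simp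

lemma ofVec_degree {m : ℕ} (v : Fin m → ZMod q) : (ofVec v).degree < (m : ℕ) := by
  refine lt_of_le_of_lt (Polynomial.degree_sum_le _ _) ?_
  rw [Finset.sup_lt_iff (by exact_mod_cast WithBot.bot_lt_coe m)]
  intro j _
  exact lt_of_le_of_lt (Polynomial.degree_monomial_le _ _) (by exact_mod_cast j.2)

lemma coeff_bijOn (m : ℕ) :
    Set.BijOn (fun (f : Polynomial (ZMod q)) (j : Fin m) => f.coeff j)
      {f | f.degree < (m : ℕ)} Set.univ := by
  refine ⟨fun f _ => Set.mem_univ _, ?_, ?_⟩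
  · intro f hf g hg hfg
    apply Polynomial.ext
    intro j
    by_cases hj : j < m
    · exact congrFun hfg ⟨j, hj⟩
    · rw [Polynomial.coeff_eq_zero_of_degree_lt (lt_of_lt_of_le hf (by exact_mod_cast not_lt.1 hj)),
        Polynomial.coeff_eq_zero_of_degree_lt (lt_of_lt_of_le hg (by exact_mod_cast not_lt.1 hj))]
  · intro v _
    exact ⟨ofVec v, ofVec_degree v, funext fun j => ofVec_coeff v j⟩

lemma finite_degLT (m : ℕ) : {f : Polynomial (ZMod q) | f.degree < (m : ℕ)}.Finite := by
  have h := (coeff_bijOn (q := q) m).injOn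
  have : Finite (Fin m → ZMod q) := inferInstance
  exact Set.Finite.of_finite_image (Set.finite_univ.subset ((coeff_bijOn (q:=q) m).image_eq ▸ Set.Subset.rfl)) h

lemma ncard_degLT (m : ℕ) : {f : Polynomial (ZMod q) | f.degree < (m : ℕ)}.ncard = q ^ m := by
  rw [myBijOn_ncard (coeff_bijOn m), Set.ncard_univ, Nat.card_pi]
  simp [Nat.card_eq_fintype_card, ZMod.card]

end Poly
section Digits

variable {q : ℕ} [Fact q.Prime] {t : ℕ} {p : Polynomial (ZMod q)}

/-- the `j`-th base-`q` digit of `r_p f`. -/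
noncomputable def dig (t : ℕ) (p f : Polynomial (ZMod q)) (j : ℕ) : ℕ :=
  (((f /ₘ p ^ (j / t)) %ₘ p).coeff (j % t)).val

/-- value of the digit string `w 0 w 1 ... w (c-1)` as an integer. -/
def vsum (q c : ℕ) (w : ℕ → ℕ) : ℕ := ∑ j ∈ Finset.range c, w j * q ^ (c - 1 - j)

lemma hq1 : 1 < q := (Fact.out : q.Prime).one_lt

lemma dig_lt (f : Polynomial (ZMod q)) (j : ℕ) : dig t p f j < q :=
  ZMod.val_lt _

lemma vsum_succ (c : ℕ) (w : ℕ → ℕ) : vsum q (c + 1) w = q * vsum q c w + w c := by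
  rw [vsum, Finset.sum_range_succ, show c + 1 - 1 - c = 0 from by omega, pow_zero, mul_one,
    vsum, Finset.mul_sum]
  congr 1
  refine Finset.sum_congr rfl fun j hj => ?_
  rw [Finset.mem_range] at hj
  rw [show c + 1 - 1 - j = (c - 1 - j) + 1 from by omega, pow_succ]
  ring

lemma vsum_congr {c : ℕ} {w w' : ℕ → ℕ} (h : ∀ j, j < c → w j = w' j) :
    vsum q c w = vsum q c w' :=
  Finset.sum_congr rfl fun j hj => by rw [h j (Finset.mem_range.1 hj)]

lemma vsum_lt (c : ℕ) (w : ℕ → ℕ) (hw : ∀ j, j < c → w j < q) : vsum q c w < q ^ c := by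
  induction c with
  | zero => simp [vsum]
  | succ c ih =>
    have h1 : vsum q c w < q ^ c := ih fun j hj => hw j (by omega)
    have h2 : w c < q := hw c (by omega)
    have h3 : 0 < q := by have := hq1 (q := q); omega
    rw [vsum_succ, pow_succ]
    nlinarith

lemma vsum_eq_iff : ∀ (c : ℕ) (w : ℕ → ℕ) (s : ℕ), (∀ j, j < c → w j < q) → s < q ^ c →
    (vsum q c w = s ↔ ∀ j, j < c → w j = s / q ^ (c - 1 - j) % q) := by
  have hq0 : 1 < q := hq1
  intro c
  induction c with
  | zero =>
    intro w s hw hs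
    simp only [pow_zero] at hs
    simp only [vsum, Finset.range_zero, Finset.sum_empty]
    constructor
    · intro h j hj; omega
    · intro _; omega
  | succ c ih =>
    intro w s hw hs
    have hsq : s / q < q ^ c := by
      rw [Nat.div_lt_iff_lt_mul (by omega)]
      calc s < q ^ (c + 1) := hs
        _ = q ^ c * q := by rw [pow_succ]
    have ihs := ih w (s / q) (fun j hj => hw j (by omega)) hsq
    rw [vsum_succ]
    constructor
    · intro h j hj
      have hdiv : s / q = vsum q c w := by
        rw [← h, Nat.mul_add_div (by omega), Nat.div_eq_of_lt (hw c (by omega))]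
        omega
      have hmod : s % q = w c := by
        rw [← h, Nat.mul_add_mod, Nat.mod_eq_of_lt (hw c (by omega))]
      by_cases hj' : j < c
      · have h5 := (ihs.mp hdiv.symm) j hj'
        rw [h5, Nat.div_div_eq_div_mul, ← pow_succ',
          show (c - 1 - j) + 1 = c + 1 - 1 - j from by omega]
      · have hjc : j = c := by omega
        rw [hjc, show c + 1 - 1 - c = 0 from by omega, pow_zero, Nat.div_one, hmod]
    · intro h
      have h1 : w c = s % q := by
        have := h c (by omega)
        rwa [show c + 1 - 1 - c = 0 from by omega, pow_zero, Nat.div_one] at this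
      have h2 : vsum q c w = s / q := by
        refine ihs.mpr fun j hj => ?_
        rw [h j (by omega), Nat.div_div_eq_div_mul, ← pow_succ',
          show (c - 1 - j) + 1 = c + 1 - 1 - j from by omega]
      rw [h1, h2]
      exact Nat.div_add_mod s q

end Digits

section Digits2

variable {q : ℕ} [Fact q.Prime] {t : ℕ} {p : Polynomial (ZMod q)}

lemma natDegree_modByMonic_lt (hp : p.Monic) (hpt : p.natDegree = t) (ht0 : 0 < t)
    (f : Polynomial (ZMod q)) : (f %ₘ p).natDegree < t := by
  by_cases h0 : f %ₘ p = 0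
  · rw [h0]; simpa using ht0
  · have := Polynomial.degree_modByMonic_lt f hp
    rw [Polynomial.degree_eq_natDegree h0, Polynomial.degree_eq_natDegree hp.ne_zero, hpt] at this
    exact_mod_cast this

lemma pev_eq (ht0 : 0 < t) (g : Polynomial (ZMod q)) (hg : g.natDegree < t) :
    pev q g = ∑ m ∈ Finset.range t, ((g.coeff m).val : ℝ) / (q : ℝ) ^ m := by
  rw [pev]
  refine Finset.sum_subset (Finset.range_subset_range.2 (by omega)) fun m _ hm => ?_
  rw [Finset.mem_range, not_lt] at hm
  rw [Polynomial.coeff_eq_zero_of_natDegree_lt (by omega)]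
  simp

lemma dig_zero_of_big (hp : p.Monic) (hpt : p.natDegree = t) (ht0 : 0 < t)
    (f : Polynomial (ZMod q)) (j : ℕ) (hj : (f.natDegree + 1) * t ≤ j) :
    dig t p f j = 0 := by
  have hi : f.natDegree + 1 ≤ j / t := (Nat.le_div_iff_mul_le ht0).2 hj
  have hdeg : f.degree < (p ^ (j / t)).degree := by
    have hne : p ^ (j / t) ≠ 0 := (hp.pow _).ne_zero
    rw [Polynomial.degree_eq_natDegree hne, Polynomial.natDegree_pow, hpt]
    refine lt_of_le_of_lt (Polynomial.degree_le_natDegree) ?_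
    have : f.natDegree < j / t * t := by
      calc f.natDegree < (f.natDegree + 1) * 1 := by omega
        _ ≤ j / t * t := Nat.mul_le_mul hi ht0
    exact_mod_cast this
  rw [dig, (Polynomial.divByMonic_eq_zero_iff (hp.pow _)).2 hdeg, Polynomial.zero_modByMonic]
  simp

lemma grid_div {i t m : ℕ} (ht0 : 0 < t) (hm : m < t) : (i * t + m) / t = i := by
  rw [mul_comm, Nat.mul_add_div ht0, Nat.div_eq_of_lt hm, add_zero]

lemma grid_mod {i t m : ℕ} (hm : m < t) : (i * t + m) % t = m := by
  rw [mul_comm, Nat.mul_add_mod, Nat.mod_eq_of_lt hm]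

lemma rp_eq_sum (hp : p.Monic) (hpt : p.natDegree = t) (ht0 : 0 < t)
    (f : Polynomial (ZMod q)) (N : ℕ) (hN : (f.natDegree + 1) * t ≤ N) :
    rp q t p f = ∑ j ∈ Finset.range N, (dig t p f j : ℝ) / (q : ℝ) ^ (j + 1) := by
  have hq0 : (0 : ℝ) < q := by
    have := hq1 (q := q); positivity
  rw [rp]
  have h1 : ∑ i ∈ Finset.range (f.natDegree + 1), pev q ((f /ₘ p ^ i) %ₘ p) / (q : ℝ) ^ (i * t)
      = ∑ j ∈ Finset.range ((f.natDegree + 1) * t), (dig t p f j : ℝ) / (q : ℝ) ^ j := by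
    have h2 : ∀ i, pev q ((f /ₘ p ^ i) %ₘ p) / (q : ℝ) ^ (i * t)
        = ∑ m ∈ Finset.range t, (dig t p f (i * t + m) : ℝ) / (q : ℝ) ^ (i * t + m) := by
      intro i
      rw [pev_eq ht0 _ (natDegree_modByMonic_lt hp hpt ht0 _), Finset.sum_div]
      refine Finset.sum_congr rfl fun m hm => ?_
      rw [Finset.mem_range] at hm
      rw [div_div, ← pow_add, dig, grid_div ht0 hm, grid_mod hm]
      ring_nf
    calc ∑ i ∈ Finset.range (f.natDegree + 1), pev q ((f /ₘ p ^ i) %ₘ p) / (q : ℝ) ^ (i * t)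
        = ∑ x ∈ Finset.range (f.natDegree + 1) ×ˢ Finset.range t,
            (dig t p f (x.1 * t + x.2) : ℝ) / (q : ℝ) ^ (x.1 * t + x.2) := by
          rw [Finset.sum_product]
          exact Finset.sum_congr rfl fun i _ => h2 i
      _ = ∑ j ∈ Finset.range ((f.natDegree + 1) * t), (dig t p f j : ℝ) / (q : ℝ) ^ j := by
          refine Finset.sum_nbij' (fun x => x.1 * t + x.2) (fun j => (j / t, j % t)) ?_ ?_ ?_ ?_ ?_
          · rintro ⟨i, m⟩ hx
            simp only [Finset.mem_product, Finset.mem_range] at hx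
            rw [Finset.mem_range]
            calc i * t + m < i * t + t := by omega
              _ = (i + 1) * t := by ring
              _ ≤ (f.natDegree + 1) * t := Nat.mul_le_mul_right t (by omega)
          · intro j hj
            rw [Finset.mem_range] at hj
            simp only [Finset.mem_product, Finset.mem_range]
            constructor
            · exact Nat.div_lt_of_lt_mul (by rwa [mul_comm] at hj)
            · exact Nat.mod_lt _ ht0
          · rintro ⟨i, m⟩ hx
            simp only [Finset.mem_product, Finset.mem_range] at hx
            simp [grid_div ht0 hx.2, grid_mod hx.2]
          · intro j hj
            simpa using Nat.div_add_mod' j t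
          · rintro ⟨i, m⟩ hx
            rfl
  rw [h1]
  have h3 : ∑ j ∈ Finset.Ico ((f.natDegree + 1) * t) N, (dig t p f j : ℝ) / (q : ℝ) ^ j = 0 := by
    refine Finset.sum_eq_zero fun j hj => ?_
    rw [Finset.mem_Ico] at hj
    rw [dig_zero_of_big hp hpt ht0 f j hj.1]
    simp
  have h4 : ∑ j ∈ Finset.range N, (dig t p f j : ℝ) / (q : ℝ) ^ (j + 1)
      = (∑ j ∈ Finset.range N, (dig t p f j : ℝ) / (q : ℝ) ^ j) / q := by
    rw [Finset.sum_div]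
    refine Finset.sum_congr rfl fun j _ => ?_
    rw [div_div, ← pow_succ]
  rw [h4, ← Finset.sum_range_add_sum_Ico (fun j => (dig t p f j : ℝ) / (q : ℝ) ^ j) hN, h3,
    add_zero]

/-- partial sums of the digit series, as rationals with denominator `q^N`. -/
lemma sum_digits_eq_vsum (N : ℕ) (w : ℕ → ℕ) :
    ∑ j ∈ Finset.range N, (w j : ℝ) / (q : ℝ) ^ (j + 1) = (vsum q N w : ℝ) / (q : ℝ) ^ N := by
  have hq0 : (0 : ℝ) < q := by have := hq1 (q := q); positivity
  induction N with
  | zero => simp [vsum]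
  | succ N ih =>
    rw [Finset.sum_range_succ, ih, vsum_succ]
    push_cast
    field_simp
    ring

lemma sum_digits_tail_lt (N M : ℕ) (hNM : N ≤ M) (w : ℕ → ℕ) (hw : ∀ j, w j < q) :
    ∑ j ∈ Finset.range M, (w j : ℝ) / (q : ℝ) ^ (j + 1)
      + 1 / (q : ℝ) ^ M ≤ ∑ j ∈ Finset.range N, (w j : ℝ) / (q : ℝ) ^ (j + 1)
      + 1 / (q : ℝ) ^ N := by
  have hq0 : (0 : ℝ) < q := by have := hq1 (q := q); positivity
  induction M, hNM using Nat.le_induction with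
  | base => exact le_rfl
  | succ M hNM ih =>
    refine le_trans ?_ ih
    rw [Finset.sum_range_succ]
    have hwM : (w M : ℝ) ≤ q - 1 := by
      have := hw M
      have : (w M : ℝ) + 1 ≤ q := by exact_mod_cast this
      linarith
    have hpow : (0:ℝ) < (q:ℝ) ^ M := by positivity
    have key : (w M : ℝ) / (q : ℝ) ^ (M + 1) + 1 / (q : ℝ) ^ (M+1) ≤ 1 / (q : ℝ) ^ M := by
      rw [← add_div, pow_succ, div_le_div_iff₀ (by positivity) hpow]
      calc ((w M : ℝ) + 1) * (q:ℝ)^M ≤ (q:ℝ) * (q:ℝ)^M := by nlinarith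
        _ = 1 * ((q:ℝ)^M * q) := by ring
    linarith

lemma rp_mem_Ico_iff (hp : p.Monic) (hpt : p.natDegree = t) (ht0 : 0 < t)
    (f : Polynomial (ZMod q)) (N c : ℕ) (hc : c + 1 ≤ q ^ N) :
    rp q t p f ∈ Set.Ico ((c : ℝ) / (q : ℝ) ^ N) (((c : ℝ) + 1) / (q : ℝ) ^ N)
      ↔ vsum q N (dig t p f) = c := by
  have hq0 : (0 : ℝ) < q := by have := hq1 (q := q); positivity
  set M := max N ((f.natDegree + 1) * t) with hM
  have hMN : N ≤ M := le_max_left _ _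
  have h1 : rp q t p f = ∑ j ∈ Finset.range M, (dig t p f j : ℝ) / (q : ℝ) ^ (j + 1) :=
    rp_eq_sum hp hpt ht0 f M (le_max_right _ _)
  have hsplit : rp q t p f = (vsum q N (dig t p f) : ℝ) / (q : ℝ) ^ N
      + ∑ j ∈ Finset.Ico N M, (dig t p f j : ℝ) / (q : ℝ) ^ (j + 1) := by
    rw [h1, ← Finset.sum_range_add_sum_Ico (fun j => (dig t p f j : ℝ) / (q : ℝ) ^ (j+1)) hMN,
      sum_digits_eq_vsum]
  set T := ∑ j ∈ Finset.Ico N M, (dig t p f j : ℝ) / (q : ℝ) ^ (j + 1) with hT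
  have hT0 : 0 ≤ T := Finset.sum_nonneg fun j _ => by positivity
  have hT1 : T < 1 / (q : ℝ) ^ N := by
    have := sum_digits_tail_lt (q := q) N M hMN (dig t p f) (fun j => dig_lt f j)
    rw [← Finset.sum_range_add_sum_Ico (fun j => (dig t p f j : ℝ) / (q : ℝ) ^ (j+1)) hMN] at this
    have hpM : (0:ℝ) < 1 / (q:ℝ) ^ M := by positivity
    linarith
  rw [hsplit]
  set v := vsum q N (dig t p f) with hv
  constructor
  · rintro ⟨hlo, hhi⟩
    have hvc : (v : ℝ) / (q:ℝ)^N < ((c:ℝ)+1)/(q:ℝ)^N := lt_of_le_of_lt (by linarith) hhi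
    have h5 : (v:ℝ) < (c:ℝ)+1 := by
      rwa [div_lt_div_iff_of_pos_right (by positivity)] at hvc
    have hcv : (c:ℝ)/(q:ℝ)^N < ((v:ℝ)+1)/(q:ℝ)^N := by
      have : (c:ℝ)/(q:ℝ)^N < (v:ℝ)/(q:ℝ)^N + 1/(q:ℝ)^N := by linarith
      rwa [← add_div] at this
    have h6 : (c:ℝ) < (v:ℝ)+1 := by
      rwa [div_lt_div_iff_of_pos_right (by positivity)] at hcv
    have : v < c + 1 := by exact_mod_cast h5
    have : c < v + 1 := by exact_mod_cast h6
    omega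
  · intro hvc
    subst hvc
    constructor
    · linarith
    · have : T < 1/(q:ℝ)^N := hT1
      have heq : ((v:ℝ)+1)/(q:ℝ)^N = (v:ℝ)/(q:ℝ)^N + 1/(q:ℝ)^N := by rw [← add_div]
      rw [heq]
      linarith

end Digits2

section Blocks

variable {q : ℕ} [Fact q.Prime] {t : ℕ} {p : Polynomial (ZMod q)}

lemma vsum_split (B c : ℕ) (w : ℕ → ℕ) :
    vsum q (B + c) w = vsum q B w * q ^ c + vsum q c (fun j => w (B + j)) := by
  induction c with
  | zero => simp [vsum]
  | succ c ih =>
    rw [show B + (c+1) = (B + c) + 1 from rfl, vsum_succ, ih, vsum_succ, pow_succ]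
    ring

lemma div_pow_add (hp : p.Monic) (f g E : Polynomial (ZMod q)) (k i : ℕ) (hik : i ≤ k) :
    (f + g * (p ^ k * E)) /ₘ p ^ i = f /ₘ p ^ i + g * E * p ^ (k - i)
      ∧ (f + g * (p ^ k * E)) %ₘ p ^ i = f %ₘ p ^ i := by
  have h := Polynomial.div_modByMonic_unique (f := f + g * (p ^ k * E)) (g := p ^ i)
    (f /ₘ p ^ i + g * E * p ^ (k - i)) (f %ₘ p ^ i) (hp.pow i) ⟨?_, ?_⟩
  · exact ⟨h.1, h.2⟩
  · have hfd : f %ₘ p ^ i + p ^ i * (f /ₘ p ^ i) = f := Polynomial.modByMonic_add_div f (p ^ i)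
    have hpk : p ^ i * p ^ (k - i) = p ^ k := by rw [← pow_add]; congr 1; omega
    calc f %ₘ p ^ i + p ^ i * (f /ₘ p ^ i + g * E * p ^ (k - i))
        = (f %ₘ p ^ i + p ^ i * (f /ₘ p ^ i)) + g * (p ^ i * p ^ (k - i)) * E := by ring
      _ = f + g * (p ^ k * E) := by rw [hfd, hpk]; ring
  · exact Polynomial.degree_modByMonic_lt f (hp.pow i)

lemma dig_add_low (hp : p.Monic) (f g E : Polynomial (ZMod q)) (k j : ℕ)
    (hj : j < t * k) :
    dig t p (f + g * (p ^ k * E)) j = dig t p f j := by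
  have ht0 : 0 < t := by
    rcases Nat.eq_zero_or_pos t with h | h
    · subst h; simp at hj
    · exact h
  have hik : j / t < k := Nat.div_lt_of_lt_mul hj
  have hdiv := (div_pow_add hp f g E k (j / t) (by omega)).1
  rw [dig, dig, hdiv, Polynomial.add_modByMonic]
  have hz : (g * E * p ^ (k - j / t)) %ₘ p = 0 := by
    rw [Polynomial.modByMonic_eq_zero_iff_dvd hp]
    exact Dvd.dvd.mul_left (dvd_pow_self p (by omega)) _
  rw [hz, add_zero]

lemma dig_add_block (hp : p.Monic) (f g E : Polynomial (ZMod q)) (k m : ℕ)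
    (ht0 : 0 < t) (hm : m < t) :
    dig t p (f + g * (p ^ k * E)) (t * k + m) = (((f /ₘ p ^ k + g * E) %ₘ p).coeff m).val := by
  have hdiv := (div_pow_add hp f g E k k le_rfl).1
  rw [dig, show t * k + m = k * t + m from by ring, grid_div ht0 hm, grid_mod hm, hdiv]
  simp

end Blocks

section EraseLow

variable {q : ℕ} [Fact q.Prime]

lemma coeff_eraseLow (c : ℕ) (f : Polynomial (ZMod q)) (j : ℕ) :
    (eraseLow q c f).coeff j = if c ≤ j then f.coeff j else 0 := by
  rw [eraseLow, Polynomial.finset_sum_coeff]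
  by_cases hj : j ∈ f.support.filter (fun j => c ≤ j)
  · rw [Finset.sum_eq_single j]
    · rw [Polynomial.coeff_monomial, if_pos rfl, if_pos (Finset.mem_filter.1 hj).2]
    · intro b _ hbj
      rw [Polynomial.coeff_monomial, if_neg hbj]
    · intro h; exact absurd hj h
  · rw [Finset.sum_eq_zero]
    · rw [Finset.mem_filter] at hj
      push_neg at hj
      by_cases hc : c ≤ j
      · by_cases hs : j ∈ f.support
        · have h8 := hj hs; omega
        · rw [if_pos hc, Polynomial.notMem_support_iff.1 hs]
      · rw [if_neg hc]
    · intro b hb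
      rw [Finset.mem_filter] at hb hj
      rw [Polynomial.coeff_monomial, if_neg]
      rintro rfl
      exact hj hb

lemma degree_eraseLow_le (c : ℕ) (f : Polynomial (ZMod q)) :
    (eraseLow q c f).degree ≤ f.degree := by
  refine (Polynomial.degree_le_iff_coeff_zero _ _).2 fun m hm => ?_
  rw [coeff_eraseLow]
  have : f.coeff m = 0 := Polynomial.coeff_eq_zero_of_degree_lt hm
  simp [this]

lemma degree_eraseLow_of_monic {c m : ℕ} {f : Polynomial (ZMod q)} (hf : f.Monic)
    (hm : f.natDegree = m) (hc : c ≤ m) :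
    (eraseLow q c f).degree = (m : WithBot ℕ) ∧ eraseLow q c f ≠ 0 := by
  have hcoeff : (eraseLow q c f).coeff m = 1 := by
    rw [coeff_eraseLow, if_pos hc, ← hm]
    exact hf.coeff_natDegree
  have hne : eraseLow q c f ≠ 0 := fun h => by simp [h] at hcoeff
  have h1 : (m : WithBot ℕ) ≤ (eraseLow q c f).degree :=
    Polynomial.le_degree_of_ne_zero (by rw [hcoeff]; exact one_ne_zero)
  have h2 : (eraseLow q c f).degree ≤ (m : WithBot ℕ) := by
    refine le_trans (degree_eraseLow_le c f) ?_
    rw [← hm]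
    exact Polynomial.degree_le_natDegree
  exact ⟨le_antisymm h2 h1, hne⟩

end EraseLow

section Intervals

variable {q : ℕ}

lemma cast_div_pow_eq (hq : 1 < q) {a m N : ℕ} (hmN : m ≤ N) :
    ((a : ℝ) / (q : ℝ) ^ m) = ((a * q ^ (N - m) : ℕ) : ℝ) / (q : ℝ) ^ N := by
  have hq0 : (0 : ℝ) < q := by exact_mod_cast Nat.lt_of_lt_of_le Nat.zero_lt_one hq.le
  have hsplit : (q : ℝ) ^ N = (q : ℝ) ^ m * (q : ℝ) ^ (N - m) := by
    rw [← pow_add]; congr 1; omega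
  have hne : ((q : ℝ) ^ (N - m)) ≠ 0 := by positivity
  push_cast
  rw [hsplit, ← mul_div_mul_right ((a : ℝ)) ((q : ℝ) ^ m) hne]

lemma Ico_lo_lt_hi (hq : 1 < q) (b N : ℕ) : ((b : ℝ)) / (q : ℝ) ^ N < ((b : ℝ) + 1) / (q : ℝ) ^ N := by
  have hq0 : (0 : ℝ) < q := by exact_mod_cast Nat.lt_of_lt_of_le Nat.zero_lt_one hq.le
  rw [div_lt_div_iff_of_pos_right (by positivity)]
  linarith

lemma Ico_nested_subset (hq : 1 < q) {b N a m : ℕ} (hmN : m ≤ N)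
    (h1 : a * q ^ (N - m) ≤ b) (h2 : b + 1 ≤ (a + 1) * q ^ (N - m)) :
    Set.Ico ((b : ℝ) / (q : ℝ) ^ N) (((b : ℝ) + 1) / (q : ℝ) ^ N)
      ⊆ Set.Ico ((a : ℝ) / (q : ℝ) ^ m) (((a : ℝ) + 1) / (q : ℝ) ^ m) := by
  have hq0 : (0 : ℝ) < q := by exact_mod_cast Nat.lt_of_lt_of_le Nat.zero_lt_one hq.le
  have hpN : (0 : ℝ) < (q : ℝ) ^ N := by positivity
  intro x hx
  obtain ⟨hlo, hhi⟩ := hx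
  constructor
  · rw [cast_div_pow_eq hq hmN (a := a) (N := N)]
    refine le_trans ?_ hlo
    rw [div_le_div_iff_of_pos_right hpN]
    exact_mod_cast h1
  · refine lt_of_lt_of_le hhi ?_
    have heq : ((a : ℝ) + 1) / (q : ℝ) ^ m = (((a + 1) * q ^ (N - m) : ℕ) : ℝ) / (q : ℝ) ^ N := by
      rw [← cast_div_pow_eq hq hmN (a := a + 1)]
      push_cast; ring
    rw [heq, div_le_div_iff_of_pos_right hpN]
    exact_mod_cast h2

lemma Ico_nested_of_subset (hq : 1 < q) {b N a m : ℕ}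
    (h : Set.Ico ((b : ℝ) / (q : ℝ) ^ N) (((b : ℝ) + 1) / (q : ℝ) ^ N)
      ⊆ Set.Ico ((a : ℝ) / (q : ℝ) ^ m) (((a : ℝ) + 1) / (q : ℝ) ^ m)) :
    m ≤ N ∧ a * q ^ (N - m) ≤ b ∧ b + 1 ≤ (a + 1) * q ^ (N - m) := by
  have hq0 : (0 : ℝ) < q := by exact_mod_cast Nat.lt_of_lt_of_le Nat.zero_lt_one hq.le
  have hpN : (0 : ℝ) < (q : ℝ) ^ N := by positivity
  have hpm : (0 : ℝ) < (q : ℝ) ^ m := by positivity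
  have hlt : ((b : ℝ)) / (q : ℝ) ^ N < ((b : ℝ) + 1) / (q : ℝ) ^ N := by
    rw [div_lt_div_iff_of_pos_right hpN]; linarith
  rw [Set.Ico_subset_Ico_iff hlt] at h
  obtain ⟨hlo, hhi⟩ := h
  have hmN : m ≤ N := by
    have k1 : 1 / (q : ℝ) ^ N ≤ 1 / (q : ℝ) ^ m := by
      have e1 : ((b : ℝ) + 1) / (q : ℝ) ^ N = (b : ℝ) / (q : ℝ) ^ N + 1 / (q : ℝ) ^ N := by
        rw [← add_div]
      have e2 : ((a : ℝ) + 1) / (q : ℝ) ^ m = (a : ℝ) / (q : ℝ) ^ m + 1 / (q : ℝ) ^ m := by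
        rw [← add_div]
      rw [e1] at hhi
      rw [e2] at hhi
      linarith
    rw [div_le_div_iff₀ (by positivity) (by positivity)] at k1
    have : (q : ℝ) ^ m ≤ (q : ℝ) ^ N := by linarith
    have hqR : (1 : ℝ) < q := by exact_mod_cast hq
    exact (pow_le_pow_iff_right₀ hqR).1 this
  refine ⟨hmN, ?_, ?_⟩
  · rw [cast_div_pow_eq hq hmN (a := a) (N := N), div_le_div_iff_of_pos_right hpN] at hlo
    exact_mod_cast hlo
  · have heq : ((a : ℝ) + 1) / (q : ℝ) ^ m = (((a + 1) * q ^ (N - m) : ℕ) : ℝ) / (q : ℝ) ^ N := by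
      rw [← cast_div_pow_eq hq hmN (a := a + 1)]
      push_cast; ring
    rw [heq, div_le_div_iff_of_pos_right hpN] at hhi
    exact_mod_cast hhi

end Intervals

section Counting

variable {q : ℕ} [Fact q.Prime]

lemma val_eq_iff (x : ZMod q) (e : ℕ) (he : e < q) : x.val = e ↔ x = (e : ZMod q) := by
  constructor
  · intro h
    rw [← h, ZMod.natCast_val, ZMod.cast_id]
  · intro h; rw [h, ZMod.val_cast_of_lt he]

lemma card_filter_fin_lt (t c : ℕ) (hc : c ≤ t) :
    (Finset.univ.filter fun j : Fin t => ¬ ((j : ℕ) < c)).card = t - c := by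
  rw [Finset.card_filter]
  rw [Fin.sum_univ_eq_sum_range (fun j => if ¬ (j < c) then 1 else 0)]
  rw [Finset.sum_ite, Finset.sum_const, Finset.sum_const]
  simp only [smul_eq_mul, mul_one, mul_zero, add_zero]
  have : (range t).filter (fun x => ¬ x < c) = Finset.Ico c t := by
    ext x
    simp only [Finset.mem_filter, Finset.mem_range, Finset.mem_Ico, not_lt]
    omega
  rw [this, Nat.card_Ico]

/-- Counting polynomials of degree `< t` whose shifted digit string has a prescribed value. -/
lemma count_W (t c : ℕ) (hc : c ≤ t) (α : Polynomial (ZMod q)) (s : ℕ) (hs : s < q ^ c) :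
    {σ : Polynomial (ZMod q) | σ.degree < (t : ℕ)
      ∧ vsum q c (fun j => (((α + σ).coeff j).val)) = s}.ncard = q ^ (t - c) := by
  have hq0 : 1 < q := hq1
  -- digits of s
  set e : ℕ → ℕ := fun j => s / q ^ (c - 1 - j) % q with he
  have helt : ∀ j, e j < q := fun j => Nat.mod_lt _ (by omega)
  set τ : ℕ → ZMod q := fun j => (e j : ZMod q) - α.coeff j with hτ
  -- rewrite the condition
  have hcond : ∀ σ : Polynomial (ZMod q),
      (vsum q c (fun j => (((α + σ).coeff j).val)) = s) ↔ ∀ j, j < c → σ.coeff j = τ j := by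
    intro σ
    rw [vsum_eq_iff c _ s (fun j _ => ZMod.val_lt _) hs]
    apply forall_congr'
    intro j
    apply imp_congr_right
    intro hj
    rw [val_eq_iff _ _ (helt j), Polynomial.coeff_add]
    constructor
    · intro h; rw [hτ]; simp only [← h]; ring
    · intro h; rw [h, hτ]; ring
  -- the pi set
  set V : Fin t → Set (ZMod q) := fun j => if ((j : ℕ) < c) then {τ (j : ℕ)} else Set.univ with hV
  have hset : {σ : Polynomial (ZMod q) | σ.degree < (t : ℕ)
        ∧ vsum q c (fun j => (((α + σ).coeff j).val)) = s}
      = {σ : Polynomial (ZMod q) | σ.degree < (t : ℕ)}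
        ∩ (fun (f : Polynomial (ZMod q)) (j : Fin t) => f.coeff j) ⁻¹' (Set.univ.pi V) := by
    ext σ
    simp only [Set.mem_setOf_eq, Set.mem_inter_iff, Set.mem_preimage, Set.mem_pi,
      Set.mem_univ, forall_true_left, hV]
    constructor
    · rintro ⟨h1, h2⟩
      refine ⟨h1, fun j => ?_⟩
      by_cases hj : (j : ℕ) < c
      · rw [if_pos hj]
        exact Set.mem_singleton_iff.2 ((hcond σ).1 h2 j hj)
      · rw [if_neg hj]; exact Set.mem_univ _
    · rintro ⟨h1, h2⟩
      refine ⟨h1, (hcond σ).2 fun j hj => ?_⟩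
      have := h2 ⟨j, by omega⟩
      rw [if_pos (by simpa using hj)] at this
      simpa using this
  rw [hset, myBijOn_ncard (myBijOn_inter_preimage (coeff_bijOn t) (Set.subset_univ _)) , myNcard_pi]
  have : ∀ j : Fin t, (V j).ncard = if ((j : ℕ) < c) then 1 else q := by
    intro j
    by_cases hj : (j : ℕ) < c
    · simp only [hV, if_pos hj, Set.ncard_singleton]
    · simp only [hV, if_neg hj, Set.ncard_univ, Nat.card_eq_fintype_card, ZMod.card]
  rw [Finset.prod_congr rfl (fun j _ => this j), Finset.prod_ite, Finset.prod_const,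
    Finset.prod_const, one_pow, one_mul, card_filter_fin_lt t c hc]

end Counting

section CRT

variable {q : ℕ} [Fact q.Prime]

lemma degree_p_eq {t : ℕ} {p : Polynomial (ZMod q)} (hm : p.Monic) (hd : p.natDegree = t) :
    p.degree = (t : ℕ) := by
  rw [Polynomial.degree_eq_natDegree hm.ne_zero, hd]

/-- The "multiplication by E then mod p" bijection on polynomials of degree < t. -/
lemma mulmod_bijOn {t : ℕ} {p E : Polynomial (ZMod q)} (hm : p.Monic) (hd : p.natDegree = t)
    (hirr : Irreducible p) (hnd : ¬ p ∣ E) :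
    Set.BijOn (fun ρ => (ρ * E) %ₘ p) {ρ : Polynomial (ZMod q) | ρ.degree < (t : ℕ)}
      {σ : Polynomial (ZMod q) | σ.degree < (t : ℕ)} := by
  refine myBijOn_of_ncard ?maps ?inj (by simp [ncard_degLT]) (finite_degLT t)
  case maps =>
    intro ρ _
    have := Polynomial.degree_modByMonic_lt (ρ * E) hm
    rwa [degree_p_eq hm hd] at this
  case inj =>
    intro ρ hρ ρ' hρ' hh
    simp only [Set.mem_setOf_eq] at hρ hρ'
    have hh2 : (ρ * E) %ₘ p = (ρ' * E) %ₘ p := hh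
    have hdvd : p ∣ (ρ - ρ') * E := by
      rw [← Polynomial.modByMonic_eq_zero_iff_dvd hm, sub_mul, Polynomial.sub_modByMonic, hh2,
        sub_self]
    have hsub : p ∣ (ρ - ρ') := (hirr.prime.dvd_mul.1 hdvd).resolve_right hnd
    have : ρ - ρ' = 0 := by
      refine Polynomial.eq_zero_of_dvd_of_degree_lt hsub ?_
      rw [degree_p_eq hm hd]
      calc (ρ - ρ').degree ≤ max ρ.degree ρ'.degree := Polynomial.degree_sub_le _ _
        _ < (t : ℕ) := max_lt hρ hρ'
    linear_combination (norm := abel) this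

/-- CRT bijection: reduction mod each `p i`. -/
lemma crt_bijOn {d t : ℕ} {p : Fin d → Polynomial (ZMod q)}
    (hm : ∀ i, (p i).Monic) (hd : ∀ i, (p i).natDegree = t)
    (hirr : ∀ i, Irreducible (p i)) (hnd : ∀ i j, i ≠ j → ¬ p i ∣ p j) :
    Set.BijOn (fun (r : Polynomial (ZMod q)) (i : Fin d) => r %ₘ p i)
      {r : Polynomial (ZMod q) | r.degree < ((d * t : ℕ) : WithBot ℕ)}
      (Set.univ.pi fun _ => {σ : Polynomial (ZMod q) | σ.degree < (t : ℕ)}) := by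
  have hprod_deg : (∏ i, p i).degree = ((d * t : ℕ) : WithBot ℕ) := by
    rw [degree_p_eq (Polynomial.monic_prod_of_monic _ _ fun i _ => hm i)]
    rw [Polynomial.natDegree_prod _ _ fun i _ => (hm i).ne_zero]
    simp only [hd]
    rw [Finset.sum_const, Finset.card_univ, Fintype.card_fin, smul_eq_mul]
  refine myBijOn_of_ncard ?maps ?inj ?card ?fin
  case maps =>
    intro r _
    rw [Set.mem_pi]
    intro i _
    have := Polynomial.degree_modByMonic_lt r (hm i)
    rwa [degree_p_eq (hm i) (hd i)] at this
  case inj =>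
    intro r hr r' hr' hh
    simp only [Set.mem_setOf_eq] at hr hr'
    have hdvd : ∀ i, p i ∣ r - r' := by
      intro i
      have hhi : r %ₘ p i = r' %ₘ p i := congrFun hh i
      rw [← Polynomial.modByMonic_eq_zero_iff_dvd (hm i), Polynomial.sub_modByMonic,
        hhi, sub_self]
    have hprod : (∏ i, p i) ∣ r - r' := by
      refine Finset.prod_dvd_of_coprime ?_ fun i _ => hdvd i
      intro i _ j _ hij
      exact ((hirr i).coprime_iff_not_dvd).2 (hnd i j hij)
    have : r - r' = 0 := by
      refine Polynomial.eq_zero_of_dvd_of_degree_lt hprod ?_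
      rw [hprod_deg]
      calc (r - r').degree ≤ max r.degree r'.degree := Polynomial.degree_sub_le _ _
        _ < _ := max_lt hr hr'
    linear_combination (norm := abel) this
  case card =>
    rw [ncard_degLT, myNcard_pi]
    simp only [ncard_degLT]
    rw [Finset.prod_const, Finset.card_univ, Fintype.card_fin, ← pow_mul, mul_comm t d]
  case fin => exact Set.Finite.pi fun _ => finite_degLT t

/-- quotient-remainder decomposition bijection, compatible with a condition depending only
on the remainder. -/
lemma split_bijOn {m M : ℕ} {P : Polynomial (ZMod q)} (hP : P.Monic) (hPd : P.natDegree = m)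
    (hmM : m ≤ M) (C : Polynomial (ZMod q) → Prop)
    (hC : ∀ r h : Polynomial (ZMod q), C (h * P + r) ↔ C r) :
    Set.BijOn (fun rh : Polynomial (ZMod q) × Polynomial (ZMod q) => rh.2 * P + rh.1)
      (({r : Polynomial (ZMod q) | r.degree < (m : ℕ) ∧ C r}) ×ˢ
        {h : Polynomial (ZMod q) | h.degree < ((M - m : ℕ) : WithBot ℕ)})
      {g : Polynomial (ZMod q) | g.degree < (M : ℕ) ∧ C g} := by
  have hPdeg : P.degree = (m : ℕ) := degree_p_eq hP hPd
  constructor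
  · rintro ⟨r, h⟩ hrh
    simp only [Set.mem_prod, Set.mem_setOf_eq] at hrh
    obtain ⟨⟨hr1, hr2⟩, hh⟩ := hrh
    constructor
    · refine lt_of_le_of_lt (Polynomial.degree_add_le _ _) (max_lt ?_ ?_)
      · refine lt_of_le_of_lt (Polynomial.degree_mul_le _ _) ?_
        rcases eq_or_ne h 0 with h0 | h0
        · rw [h0, Polynomial.degree_zero, WithBot.bot_add]
          exact WithBot.bot_lt_coe _
        · rw [Polynomial.degree_eq_natDegree h0, hPdeg]
          have hnh : h.natDegree < M - m := by
            have := hh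
            rw [Polynomial.degree_eq_natDegree h0] at this
            exact_mod_cast this
          exact_mod_cast (by omega : h.natDegree + m < M)
      · exact lt_of_lt_of_le hr1 (by exact_mod_cast hmM)
    · exact (hC r h).2 hr2
  constructor
  · rintro ⟨r, h⟩ hrh ⟨r', h'⟩ hrh' heq
    simp only [Set.mem_prod, Set.mem_setOf_eq] at hrh hrh'
    have heq2 : h * P + r = h' * P + r' := heq
    have h1 := Polynomial.div_modByMonic_unique (f := h * P + r) (g := P) h r hP
      ⟨by ring, by rw [hPdeg]; exact hrh.1.1⟩
    have h2 := Polynomial.div_modByMonic_unique (f := h' * P + r') (g := P) h' r' hP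
      ⟨by ring, by rw [hPdeg]; exact hrh'.1.1⟩
    rw [← heq2] at h2
    have hhh : h = h' := by rw [← h1.1, ← h2.1]
    have hrr : r = r' := by rw [← h1.2, ← h2.2]
    rw [Prod.mk.injEq]
    exact ⟨hrr, hhh⟩
  · intro g hg
    simp only [Set.mem_setOf_eq] at hg
    obtain ⟨hgdeg, hgC⟩ := hg
    refine ⟨(g %ₘ P, g /ₘ P), ?_, ?_⟩
    · simp only [Set.mem_prod, Set.mem_setOf_eq]
      have hgr : g %ₘ P + P * (g /ₘ P) = g := Polynomial.modByMonic_add_div g P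
      have hrdeg : (g %ₘ P).degree < (m : ℕ) := by
        have := Polynomial.degree_modByMonic_lt g hP
        rwa [hPdeg] at this
      refine ⟨⟨hrdeg, ?_⟩, ?_⟩
      · have : C ((g /ₘ P) * P + g %ₘ P) := by
          rw [show (g /ₘ P) * P + g %ₘ P = g %ₘ P + P * (g /ₘ P) from by ring, hgr]
          exact hgC
        exact (hC _ _).1 this
      · rcases eq_or_ne (g /ₘ P) 0 with h0 | h0
        · rw [h0, Polynomial.degree_zero]
          exact WithBot.bot_lt_coe _
        · have hPle : P.degree ≤ g.degree := by
            by_contra hlt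
            push_neg at hlt
            exact h0 ((Polynomial.divByMonic_eq_zero_iff hP).2 hlt)
          have hsum := Polynomial.degree_add_divByMonic hP hPle
          rw [hPdeg, Polynomial.degree_eq_natDegree h0] at hsum
          have hcast : ((m + (g /ₘ P).natDegree : ℕ) : WithBot ℕ) = g.degree := by
            exact_mod_cast hsum
          have hg' : ((m + (g /ₘ P).natDegree : ℕ) : WithBot ℕ) < (M : ℕ) := hcast ▸ hgdeg
          have hlt3 : m + (g /ₘ P).natDegree < M := by exact_mod_cast hg'
          rw [Polynomial.degree_eq_natDegree h0]
          exact_mod_cast (by omega : (g /ₘ P).natDegree < M - m)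
    · simp only
      linear_combination (Polynomial.modByMonic_add_div g P)

end CRT

section Main

variable {q d t n : ℕ} [Fact q.Prime]

/-- step: extract coordinatewise inclusion from inclusion of boxes -/
lemma pi_Ico_subset_coord {d : ℕ} {S T : Fin d → Set ℝ}
    (h : Set.univ.pi S ⊆ Set.univ.pi T) (hne : ∀ i, (S i).Nonempty) :
    ∀ i, S i ⊆ T i := by
  rcases Set.univ_pi_subset_univ_pi_iff.1 h with h' | ⟨i, hi⟩
  · exact h'
  · exact absurd hi (hne i).ne_empty

theorem main_count (hd : 2 ≤ d) (hn : 0 < n)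
    (ht1 : 0 < t)
    (hnt : 3 * d * t ≤ n)
    (p : Fin d → Polynomial (ZMod q))
    (hmonic : ∀ i, (p i).Monic) (hirr : ∀ i, Irreducible (p i))
    (hdeg : ∀ i, (p i).natDegree = t) (hinj : Function.Injective p)
    (k a : Fin d → ℕ) (ha : ∀ i, a i + 1 ≤ q ^ (t * k i))
    (β : Set (Fin d → ℝ))
    (hgood : IsGoodPair q t d n (canonicalBox q t d k a) β)
    (A : Polynomial (ZMod q))
    (hA : A.degree < ((t * ∑ i, k i : ℕ) : WithBot ℕ))
    (hAB : rmap q t d p A ∈ canonicalBox q t d k a)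
    (L : Set (Polynomial (ZMod q)))
    (hL : L = {g : Polynomial (ZMod q) |
      rmap q t d p (A + g * ∏ i, p i ^ k i) ∈ β}) :
    ({u : Polynomial (ZMod q) | ∃ g ∈ L,
        u = eraseLow q (n - d * t) A
              + g * eraseLow q (n - 3 * d * t + 1) (∏ i, p i ^ k i)}
      ∩ {u : Polynomial (ZMod q) | u.degree < ((n + d * t : ℕ) : WithBot ℕ)}).ncard
      = q ^ (d * t) := by
  classical
  have hq2 : 2 ≤ q := (Fact.out : q.Prime).two_le
  have hqR : 1 < q := (Fact.out : q.Prime).one_lt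
  set D := ∏ i, p i ^ k i with hD
  set K := ∑ i, k i with hK
  have hpne : ∀ i, p i ≠ 0 := fun i => (hmonic i).ne_zero
  have hDmonic : D.Monic := Polynomial.monic_prod_of_monic _ _ fun i _ => (hmonic i).pow _
  have hDdeg : D.natDegree = t * K := by
    rw [hD, Polynomial.natDegree_prod _ _ fun i _ => pow_ne_zero _ (hpne i), hK, Finset.mul_sum]
    exact Finset.sum_congr rfl fun i _ => by rw [Polynomial.natDegree_pow, hdeg i]; ring
  set E : Fin d → Polynomial (ZMod q) := fun i => ∏ j ∈ Finset.univ.erase i, p j ^ k j with hE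
  have hDE : ∀ i, D = p i ^ k i * E i := fun i =>
    (Finset.mul_prod_erase Finset.univ _ (Finset.mem_univ i)).symm
  have hpdvd : ∀ i j, i ≠ j → ¬ p i ∣ p j := by
    intro i j hij hdvd
    exact hij (hinj (Polynomial.eq_of_monic_of_associated (hmonic i) (hmonic j)
      ((hirr i).associated_of_dvd (hirr j) hdvd)))
  have hpE : ∀ i, ¬ p i ∣ E i := by
    intro i hdvd
    obtain ⟨j, hj, hdvd2⟩ := (hirr i).prime.exists_mem_finset_dvd hdvd
    have h2 : p i ∣ p j := (hirr i).prime.dvd_of_dvd_pow hdvd2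
    exact hpdvd i j (fun h => (Finset.mem_erase.1 hj).1 h.symm) h2
  -- unpack the good pair
  obtain ⟨⟨ν, b, hb, hνsum, hβ⟩, _, hβB, hmin⟩ := hgood
  have hβBi : ∀ i,
      Set.Ico ((b i : ℝ) / (q : ℝ) ^ (ν i)) (((b i : ℝ) + 1) / (q : ℝ) ^ (ν i))
        ⊆ Set.Ico ((a i : ℝ) / (q : ℝ) ^ (t * k i)) (((a i : ℝ) + 1) / (q : ℝ) ^ (t * k i)) := by
    rw [hβ] at hβB
    exact pi_Ico_subset_coord hβB
      (fun i => Set.nonempty_Ico.2 (Ico_lo_lt_hi hqR (b i) (ν i))) 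
  have hnest : ∀ i, t * k i ≤ ν i ∧ a i * q ^ (ν i - t * k i) ≤ b i
      ∧ b i + 1 ≤ (a i + 1) * q ^ (ν i - t * k i) :=
    fun i => Ico_nested_of_subset hqR (hβBi i)
  -- minimality: ν i < t * (k i + 1)
  have hνlt : ∀ i, ν i < t * (k i + 1) := by
    intro i
    by_contra hcon
    push_neg at hcon
    set Q := q ^ (ν i - t * (k i + 1)) with hQ
    have hQpos : 0 < Q := Nat.pow_pos (by omega)
    set k' := Function.update k i (k i + 1) with hk'
    set a' := Function.update a i (b i / Q) with ha'
    have hqsplit : q ^ (ν i) = q ^ (t * (k i + 1)) * Q := by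
      rw [hQ, ← pow_add]
      congr 1
      omega
    have hbound : b i / Q + 1 ≤ q ^ (t * (k i + 1)) := by
      have h1 : b i < q ^ (ν i) := by have := hb i; omega
      have h2 : b i / Q < q ^ (t * (k i + 1)) := by
        rw [Nat.div_lt_iff_lt_mul hQpos, ← hqsplit]
        exact h1
      omega
    have hcan : IsCanonicalBox q t d (canonicalBox q t d k' a') := by
      refine ⟨k', a', fun j => ?_, rfl⟩
      by_cases hji : j = i
      · subst hji
        rw [hk', ha', Function.update_self, Function.update_self]
        exact hbound
      · rw [hk', ha', Function.update_of_ne hji, Function.update_of_ne hji]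
        exact ha j
    have hsub : β ⊆ canonicalBox q t d k' a' := by
      rw [hβ, canonicalBox]
      refine Set.pi_mono fun j _ => ?_
      by_cases hji : j = i
      · subst hji
        rw [hk', ha', Function.update_self, Function.update_self]
        refine Ico_nested_subset hqR hcon ?_ ?_
        · calc b j / Q * q ^ (ν j - t * (k j + 1)) = b j / Q * Q := by rw [← hQ]
            _ ≤ b j := Nat.div_mul_le_self _ _
        · rw [← hQ]
          have h3 := Nat.div_add_mod (b j) Q
          have h4 := Nat.mod_lt (b j) hQpos
          have h5 : (b j / Q + 1) * Q = Q * (b j / Q) + Q := by ring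
          omega
      · rw [hk', ha', Function.update_of_ne hji, Function.update_of_ne hji]
        exact hβBi j
    have hBB' := hmin _ hcan hsub
    rw [canonicalBox, canonicalBox] at hBB'
    have hproj := pi_Ico_subset_coord hBB'
      (fun j => Set.nonempty_Ico.2 (Ico_lo_lt_hi hqR (a j) (t * k j))) i
    rw [hk', ha', Function.update_self, Function.update_self] at hproj
    have := (Ico_nested_of_subset hqR hproj).1
    have hcontra : t * (k i + 1) = t * k i + t := by ring
    omega
  -- digit-count parameters
  set c : Fin d → ℕ := fun i => ν i - t * k i with hc
  set sv : Fin d → ℕ := fun i => b i - a i * q ^ (c i) with hsv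
  have hbi : ∀ i, b i = a i * q ^ (c i) + sv i ∧ sv i < q ^ (c i) := by
    intro i
    obtain ⟨h1, h2, h3⟩ := hnest i
    have hce : c i = ν i - t * k i := rfl
    have hse : sv i = b i - a i * q ^ (c i) := rfl
    have h4 : (a i + 1) * q ^ (c i) = a i * q ^ (c i) + q ^ (c i) := by ring
    rw [hce] at hse h4 ⊢
    omega
  have hci : ∀ i, c i < t := by
    intro i
    have h1 := (hnest i).1
    have h2 := hνlt i
    have h3 : t * (k i + 1) = t * k i + t := by ring
    have hce : c i = ν i - t * k i := rfl
    rw [hce]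
    omega
  have hsumc : ∑ i, c i + t * K = n := by
    have h1 : ∀ i, c i + t * k i = ν i := fun i => by
      have := (hnest i).1
      have hce : c i = ν i - t * k i := rfl
      rw [hce]; omega
    calc ∑ i, c i + t * K = ∑ i, (c i + t * k i) := by
          rw [hK, Finset.mul_sum, ← Finset.sum_add_distrib]
      _ = n := by rw [Finset.sum_congr rfl fun i _ => h1 i, hνsum]
  have htKn : t * K ≤ n := by omega
  -- membership characterization
  set α : Fin d → Polynomial (ZMod q) := fun i => (A /ₘ (p i) ^ (k i)) %ₘ p i with hα
  set Wc : Fin d → Polynomial (ZMod q) → Prop :=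
    fun i σ => vsum q (c i) (fun j => (((α i + σ).coeff j).val)) = sv i with hWc
  have hAmem : ∀ i, vsum q (t * k i) (dig t (p i) A) = a i := by
    intro i
    have h1 := hAB
    rw [canonicalBox, Set.mem_univ_pi] at h1
    have h2 := h1 i
    rw [show rmap q t d p A i = rp q t (p i) A from rfl] at h2
    exact (rp_mem_Ico_iff (hmonic i) (hdeg i) ht1 A (t * k i) (a i) (ha i)).1 h2
  have hmem : ∀ g, g ∈ L ↔ ∀ i, Wc i ((g * E i) %ₘ p i) := by
    intro g
    rw [hL, Set.mem_setOf_eq, hβ, Set.mem_univ_pi]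
    refine forall_congr' fun i => ?_
    rw [show rmap q t d p (A + g * D) i = rp q t (p i) (A + g * D) from rfl]
    rw [rp_mem_Ico_iff (hmonic i) (hdeg i) ht1 _ (ν i) (b i) (hb i)]
    have hADE : A + g * D = A + g * ((p i) ^ (k i) * E i) := by rw [← hDE i]
    have hsplit : vsum q (ν i) (dig t (p i) (A + g * D))
        = vsum q (t * k i) (dig t (p i) (A + g * D)) * q ^ (c i)
          + vsum q (c i) (fun j => dig t (p i) (A + g * D) (t * k i + j)) := by
      have hce : c i = ν i - t * k i := rfl
      have hν : ν i = t * k i + c i := by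
        have := (hnest i).1
        omega
      rw [hν, vsum_split]
    have hlow : vsum q (t * k i) (dig t (p i) (A + g * D)) = a i := by
      rw [← hAmem i]
      refine vsum_congr fun j hj => ?_
      rw [hADE, dig_add_low (hmonic i) A g (E i) (k i) j hj]
    have hblk : vsum q (c i) (fun j => dig t (p i) (A + g * D) (t * k i + j))
        = vsum q (c i) (fun j => (((α i + (g * E i) %ₘ p i).coeff j).val)) := by
      refine vsum_congr fun j hj => ?_
      have hjt : j < t := lt_of_lt_of_le hj (le_of_lt (hci i))
      rw [hADE, dig_add_block (hmonic i) A g (E i) (k i) j ht1 hjt]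
      congr 2
      rw [Polynomial.add_modByMonic]
    rw [hsplit, hlow, hblk]
    have hb2 := hbi i
    constructor
    · intro h
      show vsum q (c i) (fun j => (((α i + (g * E i) %ₘ p i).coeff j).val)) = sv i
      omega
    · intro h
      have h' : vsum q (c i) (fun j => (((α i + (g * E i) %ₘ p i).coeff j).val)) = sv i := h
      omega
  -- counting
  set M := n + d * t - t * K with hM
  have hMdt : d * t ≤ M := by omega
  set P0 := ∏ i, p i with hP0
  have hP0monic : P0.Monic := Polynomial.monic_prod_of_monic _ _ fun i _ => hmonic i
  have hP0deg : P0.natDegree = d * t := by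
    rw [hP0, Polynomial.natDegree_prod _ _ fun i _ => hpne i]
    simp only [hdeg]
    rw [Finset.sum_const, Finset.card_univ, Fintype.card_fin, smul_eq_mul]
  set C : Polynomial (ZMod q) → Prop := fun g => ∀ i, Wc i ((g * E i) %ₘ p i) with hC
  have hCcomp : ∀ r h : Polynomial (ZMod q), C (h * P0 + r) ↔ C r := by
    intro r h
    refine forall_congr' fun i => ?_
    have hmodeq : ((h * P0 + r) * E i) %ₘ p i = (r * E i) %ₘ p i := by
      rw [add_mul, Polynomial.add_modByMonic]
      have hz : (h * P0 * E i) %ₘ p i = 0 := by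
        rw [Polynomial.modByMonic_eq_zero_iff_dvd (hmonic i)]
        exact Dvd.dvd.mul_right
          (Dvd.dvd.mul_left (Finset.dvd_prod_of_mem p (Finset.mem_univ i)) h) (E i)
      rw [hz, zero_add]
    rw [hmodeq]
  have hstep3 : ∀ i, {ρ : Polynomial (ZMod q) |
        ρ.degree < (t : ℕ) ∧ Wc i ((ρ * E i) %ₘ p i)}.ncard = q ^ (t - c i) := by
    intro i
    have hbij := mulmod_bijOn (hmonic i) (hdeg i) (hirr i) (hpE i)
    have hsetEq : {ρ : Polynomial (ZMod q) | ρ.degree < (t : ℕ) ∧ Wc i ((ρ * E i) %ₘ p i)}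
        = {ρ : Polynomial (ZMod q) | ρ.degree < (t : ℕ)}
          ∩ (fun ρ => (ρ * E i) %ₘ p i) ⁻¹' {σ | σ.degree < (t : ℕ) ∧ Wc i σ} := by
      ext ρ
      simp only [Set.mem_setOf_eq, Set.mem_inter_iff, Set.mem_preimage]
      constructor
      · rintro ⟨h1, h2⟩
        refine ⟨h1, ?_, h2⟩
        have := Polynomial.degree_modByMonic_lt (ρ * E i) (hmonic i)
        rwa [degree_p_eq (hmonic i) (hdeg i)] at this
      · rintro ⟨h1, _, h3⟩; exact ⟨h1, h3⟩
    rw [hsetEq, myBijOn_ncard (myBijOn_inter_preimage hbij (fun σ hσ => hσ.1))]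
    exact count_W t (c i) (le_of_lt (hci i)) (α i) (sv i) (hbi i).2
  set T' := Set.univ.pi (fun i => {σ : Polynomial (ZMod q) |
      σ.degree < (t : ℕ) ∧ Wc i ((σ * E i) %ₘ p i)}) with hT'
  have hsubT : T' ⊆ Set.univ.pi (fun _ => {σ : Polynomial (ZMod q) | σ.degree < (t : ℕ)}) := by
    intro f hf
    rw [hT', Set.mem_univ_pi] at hf
    rw [Set.mem_univ_pi]
    exact fun i => (hf i).1
  have hstep2 : {r : Polynomial (ZMod q) | r.degree < ((d * t : ℕ) : WithBot ℕ) ∧ C r}.ncard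
      = ∏ i, q ^ (t - c i) := by
    have hbij := crt_bijOn hmonic hdeg hirr hpdvd
    have hsetEq : {r : Polynomial (ZMod q) | r.degree < ((d * t : ℕ) : WithBot ℕ) ∧ C r}
        = {r : Polynomial (ZMod q) | r.degree < ((d * t : ℕ) : WithBot ℕ)}
          ∩ (fun (r : Polynomial (ZMod q)) (i : Fin d) => r %ₘ p i) ⁻¹' T' := by
      ext r
      have hmod : ∀ i, ((r %ₘ p i) * E i) %ₘ p i = (r * E i) %ₘ p i := by
        intro i
        conv_rhs => rw [← Polynomial.modByMonic_add_div r (p i)]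
        rw [add_mul, Polynomial.add_modByMonic]
        have hz : ((p i * (r /ₘ p i)) * E i) %ₘ p i = 0 := by
          rw [Polynomial.modByMonic_eq_zero_iff_dvd (hmonic i)]
          exact Dvd.dvd.mul_right (Dvd.dvd.mul_right (dvd_refl (p i)) _) _
        rw [hz, add_zero]
      simp only [Set.mem_setOf_eq, Set.mem_inter_iff, Set.mem_preimage, hT', Set.mem_univ_pi]
      constructor
      · rintro ⟨h1, h2⟩
        refine ⟨h1, fun i => ⟨?_, ?_⟩⟩
        · have := Polynomial.degree_modByMonic_lt r (hmonic i)
          rwa [degree_p_eq (hmonic i) (hdeg i)] at this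
        · rw [hmod i]; exact h2 i
      · rintro ⟨h1, h2⟩
        refine ⟨h1, fun i => ?_⟩
        have := (h2 i).2
        rwa [hmod i] at this
    rw [hsetEq, myBijOn_ncard (myBijOn_inter_preimage hbij hsubT), hT', myNcard_pi]
    exact Finset.prod_congr rfl fun i _ => hstep3 i
  have hstep1 : {g : Polynomial (ZMod q) | g.degree < ((M : ℕ) : WithBot ℕ) ∧ C g}.ncard
      = (∏ i, q ^ (t - c i)) * q ^ (M - d * t) := by
    have hbij := split_bijOn (q := q) hP0monic hP0deg hMdt C hCcomp
    rw [← myBijOn_ncard hbij, myNcard_prod, hstep2, ncard_degLT]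
  -- final assembly
  set Ab := eraseLow q (n - d * t) A with hAb
  set Db := eraseLow q (n - 3 * d * t + 1) D with hDb
  have hsumub : ∑ i, c i ≤ d * (t - 1) := by
    calc ∑ i, c i ≤ ∑ _i : Fin d, (t - 1) :=
          Finset.sum_le_sum fun i _ => by have := hci i; omega
      _ = d * (t - 1) := by rw [Finset.sum_const, Finset.card_univ, Fintype.card_fin, smul_eq_mul]
  have hdt_split : d * t = d * (t - 1) + d := by
    have ht' : t = (t - 1) + 1 := by omega
    calc d * t = d * ((t - 1) + 1) := by rw [← ht']
      _ = d * (t - 1) + d := by ring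
  have h3dt : 3 * d * t = 3 * (d * t) := by ring
  have hcut : n - 3 * d * t + 1 ≤ t * K := by omega
  obtain ⟨hDbdeg, hDbne⟩ := degree_eraseLow_of_monic hDmonic hDdeg hcut
  have hAbdeg : Ab.degree < ((t * K : ℕ) : WithBot ℕ) :=
    lt_of_le_of_lt (degree_eraseLow_le _ _) hA
  have hdegiff : ∀ g : Polynomial (ZMod q),
      (Ab + g * Db).degree < ((n + d * t : ℕ) : WithBot ℕ)
        ↔ g.degree < ((M : ℕ) : WithBot ℕ) := by
    intro g
    rcases eq_or_ne g 0 with rfl | hg0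
    · simp only [zero_mul, add_zero, Polynomial.degree_zero]
      constructor
      · intro _; exact WithBot.bot_lt_coe _
      · intro _
        refine lt_of_lt_of_le hAbdeg ?_
        exact_mod_cast (by omega : t * K ≤ n + d * t)
    · have hgD : (g * Db).degree = ((g.natDegree + t * K : ℕ) : WithBot ℕ) := by
        rw [Polynomial.degree_mul, hDbdeg, Polynomial.degree_eq_natDegree hg0]
        exact_mod_cast rfl
      have hAd : Ab.degree < (g * Db).degree := by
        refine lt_of_lt_of_le hAbdeg ?_
        rw [hgD]
        exact_mod_cast (by omega : t * K ≤ g.natDegree + t * K)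
      rw [Polynomial.degree_add_eq_right_of_degree_lt hAd, hgD,
        Polynomial.degree_eq_natDegree hg0]
      constructor
      · intro h
        have h2 : g.natDegree + t * K < n + d * t := by exact_mod_cast h
        exact_mod_cast (by omega : g.natDegree < M)
      · intro h
        have h2 : g.natDegree < M := by exact_mod_cast h
        exact_mod_cast (by omega : g.natDegree + t * K < n + d * t)
  have hYinj : Set.InjOn (fun g => Ab + g * Db)
      {g : Polynomial (ZMod q) | g.degree < ((M : ℕ) : WithBot ℕ) ∧ C g} := by
    intro g1 _ g2 _ hgg
    simp only at hgg
    have h1 : g1 * Db = g2 * Db := by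
      have := hgg
      exact add_left_cancel this
    exact mul_right_cancel₀ hDbne h1
  have hsetS : {u : Polynomial (ZMod q) | ∃ g ∈ L, u = Ab + g * Db}
      ∩ {u : Polynomial (ZMod q) | u.degree < ((n + d * t : ℕ) : WithBot ℕ)}
      = (fun g => Ab + g * Db) ''
          {g : Polynomial (ZMod q) | g.degree < ((M : ℕ) : WithBot ℕ) ∧ C g} := by
    ext u
    simp only [Set.mem_inter_iff, Set.mem_setOf_eq, Set.mem_image]
    constructor
    · rintro ⟨⟨g, hgL, rfl⟩, hdeg2⟩
      exact ⟨g, ⟨(hdegiff g).1 hdeg2, (hmem g).1 hgL⟩, rfl⟩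
    · rintro ⟨g, ⟨hgdeg, hgC⟩, rfl⟩
      exact ⟨⟨g, (hmem g).2 hgC, rfl⟩, (hdegiff g).2 hgdeg⟩
  rw [hsetS, Set.ncard_image_of_injOn hYinj, hstep1]
  rw [Finset.prod_pow_eq_pow_sum, ← pow_add]
  congr 1
  have hsum1 : ∑ i, (t - c i) + ∑ i, c i = d * t := by
    rw [← Finset.sum_add_distrib]
    calc ∑ i, (t - c i + c i) = ∑ _i : Fin d, t :=
          Finset.sum_congr rfl fun i _ => by have := hci i; omega
      _ = d * t := by rw [Finset.sum_const, Finset.card_univ, Fintype.card_fin, smul_eq_mul]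
  omega

end Main


/-- Claim 4: for a good pair `(B, β)` with type `T = (Ā, D̄)` and
`L = L_B(β)`, the set `Ȳ_T(L) = {Ā + g·D̄ : g ∈ L} ∩ P_{<n+dt}` has size exactly `q^(dt)`. -/
theorem stmt14 (q d t n : ℕ) [Fact q.Prime] (hd : 2 ≤ d) (hn : 0 < n)
    (ht : t = ⌈2 * Real.log d / Real.log q + 2⌉₊)
    (hnt : 3 * d * t ≤ n)
    (p : Fin d → Polynomial (ZMod q))
    (hmonic : ∀ i, (p i).Monic) (hirr : ∀ i, Irreducible (p i))
    (hdeg : ∀ i, (p i).natDegree = t) (hinj : Function.Injective p)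
    (k a : Fin d → ℕ) (ha : ∀ i, a i + 1 ≤ q ^ (t * k i))
    (β : Set (Fin d → ℝ))
    (hgood : IsGoodPair q t d n (canonicalBox q t d k a) β)
    (A : Polynomial (ZMod q))
    (hA : A.degree < ((t * ∑ i, k i : ℕ) : WithBot ℕ))
    (hAB : rmap q t d p A ∈ canonicalBox q t d k a)
    (L : Set (Polynomial (ZMod q)))
    (hL : L = {g : Polynomial (ZMod q) |
      rmap q t d p (A + g * ∏ i, p i ^ k i) ∈ β}) :
    ({u : Polynomial (ZMod q) | ∃ g ∈ L,
        u = eraseLow q (n - d * t) A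
              + g * eraseLow q (n - 3 * d * t + 1) (∏ i, p i ^ k i)}
      ∩ {u : Polynomial (ZMod q) | u.degree < ((n + d * t : ℕ) : WithBot ℕ)}).ncard
      = q ^ (d * t) := by
  have hqR : 1 < q := (Fact.out : q.Prime).one_lt
  have ht1 : 0 < t := by
    rw [ht]
    have hlogd : 0 ≤ Real.log d := Real.log_nonneg (by exact_mod_cast Nat.one_le_of_lt hd)
    have hlogq : 0 < Real.log q := Real.log_pos (by exact_mod_cast hqR)
    have hx : (0 : ℝ) < 2 * Real.log d / Real.log q + 2 := by positivity
    have := Nat.lt_ceil.2 (by exact_mod_cast hx : ((0 : ℕ) : ℝ) < 2 * Real.log d / Real.log q + 2)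
    omega
  exact main_count hd hn ht1 hnt p hmonic hirr hdeg hinj k a ha β hgood A hA hAB L hL
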